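/- Let n ≥ 2 be a real number, α ∈ (0,1), and define δ := 2(1−α)²/(n+(1−α)²). Let J, t, x, y be real numbers with 0 < J ≤ 1, t > 0, x ≥ 0, and set Q := αJx − y. Assume Q ≥ 0 and 0 ≥ αt·((2−δ)/n)·J·(x−y)² − δ·α·t·J·x² − Q. Then t·Q ≤ n/((2−δ)·α·J). -/

import Mathlib

/-- The combined maximum-point algebra in the Li–Yau argument.
With `n ≥ 2` real, `α ∈ (0,1)`, `δ := 2(1−α)²/(n+(1−α)²)`, `0 < J ≤ 1`, `t > 0`,
`x ≥ 0`, `Q := αJx − y`, if `Q ≥ 0` and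
`0 ≥ αt((2−δ)/n)J(x−y)² − δαtJx² − Q` then `tQ ≤ n/((2−δ)αJ)`. -/
theorem maximum_point_bound (n α : ℝ) (hn : 2 ≤ n) (hα : α ∈ Set.Ioo (0 : ℝ) 1)
    (δ : ℝ) (hδ : δ = 2 * (1 - α) ^ 2 / (n + (1 - α) ^ 2))
    (J t x y : ℝ) (hJ0 : 0 < J) (hJ1 : J ≤ 1) (ht : 0 < t) (hx : 0 ≤ x)
    (Q : ℝ) (hQ : Q = α * J * x - y) (hQ0 : Q ≥ 0)
    (h : 0 ≥ α * t * ((2 - δ) / n) * J * (x - y) ^ 2 - δ * α * t * J * x ^ 2 - Q) :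
    t * Q ≤ n / ((2 - δ) * α * J) := by
  obtain ⟨hα0, hα1⟩ := hα
  have hn0 : (0:ℝ) < n := by linarith
  have hden : (0:ℝ) < n + (1 - α) ^ 2 := by positivity
  have h2δ : 2 - δ = 2 * n / (n + (1 - α) ^ 2) := by
    rw [hδ]; field_simp; ring
  have h2δpos : 0 < 2 - δ := by rw [h2δ]; positivity
  have hkey : (2 - δ) / n * (1 - α) ^ 2 = δ := by
    rw [h2δ, hδ]; field_simp
  -- y = αJx - Q, so x - y = (1 - αJ)x + Q
  have hxy : x - y = (1 - α * J) * x + Q := by rw [hQ]; ring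
  have h1αJ : 1 - α ≤ 1 - α * J := by nlinarith
  have h1α0 : 0 < 1 - α := by linarith
  have hsq2 : (1 - α) ^ 2 ≤ (1 - α * J) ^ 2 := by nlinarith
  have hsq : (1 - α) ^ 2 * x ^ 2 + Q ^ 2 ≤ (x - y) ^ 2 := by
    rw [hxy]
    nlinarith [mul_nonneg (mul_nonneg (by linarith : (0:ℝ) ≤ 1 - α * J) hx) hQ0,
      mul_le_mul_of_nonneg_right hsq2 (sq_nonneg x)]
  have hfac : 0 < α * t * ((2 - δ) / n) * J := by positivity
  have hmain : α * t * ((2 - δ) / n) * J * Q ^ 2 ≤ Q := by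
    have h1 := mul_le_mul_of_nonneg_left hsq (le_of_lt hfac)
    have e : α * t * ((2 - δ) / n) * J * ((1 - α) ^ 2 * x ^ 2)
        = δ * α * t * J * x ^ 2 := by linear_combination (α * t * J * x ^ 2) * hkey
    nlinarith [h1, e, h]
  rcases eq_or_lt_of_le hQ0 with hQe | hQpos
  · rw [← hQe]
    simp only [mul_zero]
    positivity
  · rw [le_div_iff₀ (by positivity)]
    have hAQ : α * t * ((2 - δ) / n) * J * Q ≤ 1 := by
      have h4 : α * t * ((2 - δ) / n) * J * Q * Q ≤ 1 * Q := by
        rw [one_mul]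
        calc α * t * ((2 - δ) / n) * J * Q * Q
            = α * t * ((2 - δ) / n) * J * Q ^ 2 := by ring
          _ ≤ Q := hmain
      exact le_of_mul_le_mul_right h4 hQpos
    have hc : n * ((2 - δ) / n) = 2 - δ := mul_div_cancel₀ _ hn0.ne'
    have e3 : t * Q * ((2 - δ) * α * J) = n * (α * t * ((2 - δ) / n) * J * Q) := by
      linear_combination (-(t * Q * α * J)) * hc
    rw [e3]
    calc n * (α * t * ((2 - δ) / n) * J * Q) ≤ n * 1 :=
          mul_le_mul_of_nonneg_left hAQ hn0.le
      _ = n := mul_one n
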